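/- For integers 0 ≤ j ≤ n, the elementary symmetric polynomial of the geometric progression 1, q, q², …, q^{n−1} satisfies e_j(1, q, …, q^{n−1}) = q^{j(j−1)/2} · ∏_{i=1}^{j} (1 − q^{n−i+1})/(1 − q^{i}) in the field ℚ(q). -/

import Mathlib

noncomputable section

/-- The field `ℚ(q)`. -/
abbrev Fq : Type := RatFunc ℚ

def qv : Fq := RatFunc.X

lemma esymm_cons_aux (a : Fq) (s : Multiset Fq) (k : ℕ) :
    (a ::ₘ s).esymm (k + 1) = s.esymm (k + 1) + a * s.esymm k := by
  unfold Multiset.esymm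
  rw [Multiset.powersetCard_cons, Multiset.map_add, Multiset.sum_add, Multiset.map_map,
    ← Multiset.sum_map_mul_left]
  simp [Function.comp_def, Multiset.prod_cons]

lemma one_sub_qv_pow_ne (m : ℕ) : (1 : Fq) - qv ^ (m + 1) ≠ 0 := by
  have h : (1 : Fq) - qv ^ (m + 1) =
      algebraMap (Polynomial ℚ) Fq (1 - Polynomial.X ^ (m + 1)) := by
    simp [qv, RatFunc.algebraMap_X]
  rw [h]
  intro hzero
  have h2 : (1 - Polynomial.X ^ (m + 1) : Polynomial ℚ) = 0 :=
    IsFractionRing.injective (Polynomial ℚ) Fq (by rw [hzero, map_zero])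
  have := congrArg (fun p => Polynomial.coeff p (m + 1)) h2
  simp [Polynomial.coeff_one] at this

lemma key (n j : ℕ) :
    Multiset.esymm (((List.range n).map fun i => qv ^ i : List Fq) : Multiset Fq) j *
      ∏ i ∈ Finset.range j, (1 - qv ^ (i + 1)) =
    qv ^ (j * (j - 1) / 2) * ∏ i ∈ Finset.range j, (1 - qv ^ (n - i)) := by
  induction n generalizing j with
  | zero =>
    cases j with
    | zero => simp [Multiset.esymm]
    | succ k =>
      have hR : (∏ i ∈ Finset.range (k + 1), (1 - qv ^ (0 - i))) = 0 :=
        Finset.prod_eq_zero (Finset.mem_range.2 (Nat.succ_pos k)) (by simp)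
      rw [hR, mul_zero]
      simp [Multiset.esymm, Multiset.powersetCard_zero_right]
  | succ n ih =>
    cases j with
    | zero => simp [Multiset.esymm]
    | succ k =>
      have hsplit : (((List.range (n+1)).map fun i => qv ^ i : List Fq) : Multiset Fq)
          = qv ^ n ::ₘ (((List.range n).map fun i => qv ^ i : List Fq) : Multiset Fq) := by
        rw [List.range_succ, List.map_append]
        -- coe of list append is multiset add
        simp [add_comm, Multiset.singleton_add]
      rw [hsplit, esymm_cons_aux]
      have ih1 := ih (k + 1)
      have ih2 := ih k
      rw [Finset.prod_range_succ, Finset.prod_range_succ] at ih1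
      rw [Finset.prod_range_succ]
      rw [show (∏ i ∈ Finset.range (k+1), (1 - qv ^ (n + 1 - i)))
            = (∏ i ∈ Finset.range k, (1 - qv ^ (n - i))) * (1 - qv ^ (n + 1)) by
        rw [Finset.prod_range_succ']
        simp [Nat.add_sub_add_right]]
      have hpow : qv ^ ((k+1) * ((k+1) - 1) / 2) = qv ^ (k * (k - 1) / 2) * qv ^ k := by
        rw [← pow_add]
        congr 1
        have h2 : (k+1) * ((k+1) - 1) = k * (k - 1) + k * 2 := by
          cases k with
          | zero => rfl
          | succ m => simp only [Nat.add_sub_cancel]; ring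
        rw [h2, Nat.add_mul_div_right _ _ (by norm_num)]
      rcases le_or_gt k n with hkn | hkn
      · have hq : qv ^ k * qv ^ (n - k) = qv ^ n := by
          rw [← pow_add]; congr 1; omega
        linear_combination ih1 + qv ^ n * (1 - qv ^ (k+1)) * ih2 +
          (∏ i ∈ Finset.range k, (1 - qv ^ (n - i))) *
            ((1 - qv ^ (n - k)) - (1 - qv ^ (n + 1))) * hpow -
          qv ^ (k * (k - 1) / 2) * (∏ i ∈ Finset.range k, (1 - qv ^ (n - i))) * hq
      · have hA : (∏ i ∈ Finset.range k, (1 - qv ^ (n - i))) = 0 := by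
          apply Finset.prod_eq_zero (Finset.mem_range.2 hkn)
          simp
        linear_combination ih1 + qv ^ n * (1 - qv ^ (k+1)) * ih2 +
          (qv ^ ((k+1) * ((k+1) - 1) / 2) * (1 - qv ^ (n - k)) -
           qv ^ ((k+1) * ((k+1) - 1) / 2) * (1 - qv ^ (n + 1)) +
           qv ^ n * (1 - qv ^ (k+1)) * qv ^ (k * (k - 1) / 2)) * hA

/-- Gauss's evaluation of the elementary symmetric polynomial of the geometric progression
`1, q, q², …, q^{n-1}`: for `0 ≤ j ≤ n`,
`e_j(1, q, …, q^{n-1}) = q^{j(j-1)/2} ∏_{i=1}^{j} (1 - q^{n-i+1})/(1 - q^i)`. -/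
theorem esymm_geometric (n j : ℕ) (hj : j ≤ n) :
    Multiset.esymm (((List.range n).map fun i => qv ^ i : List Fq) : Multiset Fq) j =
      qv ^ (j * (j - 1) / 2) * ∏ i ∈ Finset.range j, (1 - qv ^ (n - i)) / (1 - qv ^ (i + 1)) := by
  have hD : (∏ i ∈ Finset.range j, (1 - qv ^ (i + 1))) ≠ 0 :=
    Finset.prod_ne_zero_iff.2 fun i _ => one_sub_qv_pow_ne i
  rw [Finset.prod_div_distrib, mul_div_assoc', eq_div_iff hD]
  exact key n j
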